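/- For the Catalan numbers C_n = binom(2n,n)/(n+1), the k-fold convolution satisfies sum over (j_1,...,j_k) nonnegative integers with j_1+...+j_k = n of C_{j_1}···C_{j_k} = (k/(2n+k)) * binom(2n+k, n). -/

import Mathlib

open Finset PowerSeries

lemma split_lemma (k n : ℕ) (f : ℕ → ℚ) :
    ∑ x ∈ Finset.Nat.antidiagonalTuple (k+1) n, ∏ i, f (x i)
      = ∑ p ∈ Finset.HasAntidiagonal.antidiagonal n, f p.1 * ∑ y ∈ Finset.Nat.antidiagonalTuple k p.2, ∏ i, f (y i) := by
  simp_rw [Finset.mul_sum]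
  rw [Finset.sum_sigma']
  refine (Finset.sum_bij' (fun x _ => Fin.cons x.1.1 x.2)
    (fun y _ => ⟨(y 0, ∑ i : Fin k, y i.succ), Fin.tail y⟩) ?_ ?_ ?_ ?_ ?_).symm
  · rintro ⟨⟨a, b⟩, y⟩ h
    simp only [Finset.mem_sigma, Finset.HasAntidiagonal.mem_antidiagonal,
      Finset.Nat.mem_antidiagonalTuple] at h ⊢
    rw [Fin.sum_cons]
    omega
  · intro y h
    simp only [Finset.Nat.mem_antidiagonalTuple, Finset.mem_sigma,
      Finset.HasAntidiagonal.mem_antidiagonal] at h ⊢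
    rw [Fin.sum_univ_succ] at h
    exact ⟨h, rfl⟩
  · rintro ⟨⟨a, b⟩, y⟩ h
    simp only [Finset.mem_sigma, Finset.HasAntidiagonal.mem_antidiagonal,
      Finset.Nat.mem_antidiagonalTuple] at h
    simp [Fin.cons_zero, Fin.tail_cons, h.2]
  · intro y h
    simp [Fin.cons_self_tail]
  · rintro ⟨⟨a, b⟩, y⟩ h
    simp [Fin.prod_univ_succ]

noncomputable def Cs : PowerSeries ℚ := PowerSeries.mk fun n => (catalan n : ℚ)

lemma coeff_Cs (n : ℕ) : coeff n Cs = (catalan n : ℚ) := coeff_mk n _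

lemma bridge (k n : ℕ) :
    coeff n (Cs ^ k) = ∑ x ∈ Finset.Nat.antidiagonalTuple k n, ∏ i, (catalan (x i) : ℚ) := by
  induction k generalizing n with
  | zero =>
    cases n with
    | zero => simp [Finset.Nat.antidiagonalTuple_zero_zero]
    | succ m => simp [Finset.Nat.antidiagonalTuple_zero_succ, coeff_one]
  | succ k ih =>
    rw [pow_succ', coeff_mul]
    simp_rw [coeff_Cs, ih]
    exact (split_lemma k n (fun m => (catalan m : ℚ))).symm

lemma hC : Cs = 1 + PowerSeries.X * Cs ^ 2 := by
  ext n
  cases n with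
  | zero => simp [coeff_Cs]
  | succ m =>
    rw [coeff_Cs, map_add, PowerSeries.coeff_succ_X_mul, sq, coeff_mul]
    rw [catalan_succ']
    push_cast
    simp [coeff_Cs, coeff_one]

lemma hpow (k : ℕ) : Cs ^ (k + 1) = Cs ^ k + PowerSeries.X * Cs ^ (k + 2) :=
  calc Cs ^ (k+1) = Cs ^ k * Cs := pow_succ _ _
    _ = Cs ^ k * (1 + PowerSeries.X * Cs ^ 2) := by rw [← hC]
    _ = Cs ^ k + PowerSeries.X * Cs ^ (k + 2) := by ring

lemma nat1 (n : ℕ) : (2 * n + 1) * catalan n = (2 * n + 1).choose n := by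
  apply Nat.eq_of_mul_eq_mul_left (show 0 < n + 1 by omega)
  calc (n+1) * ((2*n+1) * catalan n) = (2*n+1) * ((n+1) * catalan n) := by ring
    _ = (2*n+1) * Nat.centralBinom n := by rw [succ_mul_catalan_eq_centralBinom]
    _ = (2*n+1) * (2*n).choose n := rfl
    _ = (2*n+1).choose (n+1) * (n+1) := Nat.add_one_mul_choose_eq (2*n) n
    _ = (n+1) * ((2*n+1).choose n) := by
        rw [show (2*n+1).choose (n+1) = (2*n+1).choose n from ?_, Nat.mul_comm]
        rw [← Nat.choose_symm (show n+1 ≤ 2*n+1 by omega)]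
        congr 1
        omega

lemma alg (k m : ℕ) :
    (k : ℚ) / (2 * ((m:ℚ)+1) + k) * (((2 * (m+1) + k).choose (m+1) : ℕ) : ℚ)
      + ((k:ℚ)+2) / (2 * m + ((k:ℚ)+2)) * (((2 * m + (k+2)).choose m : ℕ) : ℚ)
      = ((k:ℚ)+1) / (2 * ((m:ℚ)+1) + ((k:ℚ)+1)) * (((2 * (m+1) + (k+1)).choose (m+1) : ℕ) : ℚ) := by
  have e : 2*m + (k+2) = 2*(m+1)+k := by omega
  have e3 : 2*(m+1) + (k+1) = (2*(m+1)+k)+1 := by omega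
  rw [e, e3]
  set N := 2*(m+1)+k with hNdef
  have pascal : ((N+1).choose (m+1) : ℚ) = (N.choose m : ℚ) + (N.choose (m+1) : ℚ) := by
    exact_mod_cast Nat.choose_succ_succ N m
  have key : ((m:ℚ)+1) * (N.choose (m+1) : ℚ) = ((m:ℚ)+(k:ℚ)+2) * (N.choose m : ℚ) := by
    have h := Nat.choose_succ_right_eq N m
    have hsub : N - m = m + k + 2 := by omega
    rw [hsub] at h
    have h2 := congrArg (Nat.cast : ℕ → ℚ) h
    push_cast at h2
    linarith
  rw [pascal]
  have hd : (2 * (m:ℚ) + (k:ℚ) + 2) ≠ 0 := by positivity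
  have hd1 : (2 * (m:ℚ) + (k:ℚ) + 3) ≠ 0 := by positivity
  have g1 : 2 * ((m:ℚ)+1) + k = 2 * (m:ℚ) + (k:ℚ) + 2 := by ring
  have g2 : 2 * (m:ℚ) + ((k:ℚ)+2) = 2 * (m:ℚ) + (k:ℚ) + 2 := by ring
  have g3 : 2 * ((m:ℚ)+1) + ((k:ℚ)+1) = 2 * (m:ℚ) + (k:ℚ) + 3 := by ring
  rw [g1, g2, g3]
  set a := (N.choose m : ℚ) with ha
  set b := (N.choose (m+1) : ℚ) with hb
  field_simp
  linear_combination (-2 : ℚ) * key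

lemma main_lemma : ∀ n k : ℕ, 1 ≤ k →
    coeff n (Cs ^ k) = (k : ℚ) / (2 * n + k) * ((2 * n + k).choose n : ℚ) := by
  intro n
  induction n using Nat.strong_induction_on with
  | _ n IH =>
    intro k hk
    induction k with
    | zero => omega
    | succ k ihk =>
      rcases Nat.eq_zero_or_pos k with rfl | hk1
      · -- k = 0, so proving for k = 1
        rw [pow_one, coeff_Cs]
        have h2 := congrArg (Nat.cast : ℕ → ℚ) (nat1 n)
        push_cast at h2
        push_cast
        rw [div_mul_eq_mul_div, one_mul, eq_div_iff (by positivity)]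
        linarith [h2]
      · rw [hpow k, map_add]
        cases n with
        | zero =>
          rw [PowerSeries.coeff_zero_X_mul, ihk hk1]
          have hkq : (k:ℚ) ≠ 0 := Nat.cast_ne_zero.mpr (by omega)
          simp only [Nat.cast_zero, mul_zero, zero_add, add_zero, Nat.choose_zero_right,
            Nat.cast_one, mul_one, Nat.cast_add]
          rw [div_self hkq, div_self (by positivity)]
        | succ m =>
          rw [PowerSeries.coeff_succ_X_mul, ihk hk1, IH m (by omega) (k+2) (by omega)]
          have := alg k m
          push_cast at this ⊢
          convert this using 2


/-- k-fold convolution of Catalan numbers: `∑_{j₁+⋯+j_k=n} C_{j₁}⋯C_{j_k} = (k/(2n+k))·C(2n+k, n)`. -/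
theorem catalan_multifold_convolution (k n : ℕ) (hk : 1 ≤ k) :
    (∑ j ∈ Finset.Nat.antidiagonalTuple k n, ∏ i, (catalan (j i) : ℚ))
      = (k : ℚ) / (2 * n + k) * ((2 * n + k).choose n : ℚ) := by
  rw [← bridge]
  exact main_lemma n k hk
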